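/- Let L, M, Z be nonempty finite sets, F a two-universal family of hash functions from L to M such that every f ∈ F satisfies |f⁻¹(m)| = |L|/|M| for all m ∈ M. Let Q : L → (Z → ℝ>0) be a strictly positive conditional probability kernel and let L be uniformly distributed on L. For f ∈ F let Q_{Z|f(L)}(z|m) = (|M|/|L|) Σ_{ℓ: f(ℓ)=m} Q(z|ℓ). Then for every 0 < s ≤ 1/2, with u = s/(1-s), the average over uniform f ∈ F of exp(φ̄(s, Q_{Z|f(L)})) is at most 1 + (|M|/|L|)^s exp(φ̄(s, Q)), where φ̄(s, R) = ln Σ_z ( average over inputs of R(z|·)^{1+u} )^{1/(1+u)} with the average taken uniformly over the input alphabet of R. -/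

import Mathlib

open Finset

lemma myAdd_rpow_le {x y p : ℝ} (hx : 0 ≤ x) (hy : 0 ≤ y) (hp0 : 0 ≤ p) (hp1 : p ≤ 1) :
    (x + y) ^ p ≤ x ^ p + y ^ p := by
  have h := NNReal.rpow_add_le_add_rpow x.toNNReal y.toNNReal hp0 hp1
  have h' : (((x.toNNReal + y.toNNReal) ^ p : NNReal) : ℝ)
      ≤ ((x.toNNReal ^ p + y.toNNReal ^ p : NNReal) : ℝ) := by exact_mod_cast h
  calc (x + y) ^ p = (((x.toNNReal + y.toNNReal : NNReal) : ℝ)) ^ p := by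
        rw [NNReal.coe_add, Real.coe_toNNReal x hx, Real.coe_toNNReal y hy]
    _ = (((x.toNNReal + y.toNNReal) ^ p : NNReal) : ℝ) := (NNReal.coe_rpow _ _).symm
    _ ≤ ((x.toNNReal ^ p + y.toNNReal ^ p : NNReal) : ℝ) := h'
    _ = x ^ p + y ^ p := by
        rw [NNReal.coe_add, NNReal.coe_rpow, NNReal.coe_rpow,
          Real.coe_toNNReal x hx, Real.coe_toNNReal y hy]

lemma avg_rpow_le {ι : Type*} (F : Finset ι) (hF : F.Nonempty) (x : ι → ℝ)
    (hx : ∀ f ∈ F, 0 ≤ x f) {c : ℝ} (hc0 : 0 < c) (hc1 : c ≤ 1) :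
    (1 / F.card : ℝ) * ∑ f ∈ F, x f ^ c ≤ ((1 / F.card : ℝ) * ∑ f ∈ F, x f) ^ c := by
  have hcard : (0:ℝ) < F.card := by exact_mod_cast (Finset.card_pos.mpr hF)
  have hw : ∀ f ∈ F, (0:ℝ) ≤ 1 / F.card := fun _ _ => by positivity
  have hw' : ∑ _f ∈ F, (1 / F.card : ℝ) = 1 := by
    rw [Finset.sum_const, nsmul_eq_mul]; field_simp
  have hz : ∀ f ∈ F, 0 ≤ x f ^ c := fun f hf => Real.rpow_nonneg (hx f hf) c
  have hp : (1:ℝ) ≤ 1 / c := by rw [le_div_iff₀ hc0]; linarith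
  have h := Real.arith_mean_le_rpow_mean F (fun _ => (1 / F.card : ℝ)) (fun f => x f ^ c)
      hw hw' hz hp
  rw [Finset.mul_sum, Finset.mul_sum]
  calc ∑ f ∈ F, (1/F.card:ℝ) * x f ^ c
      ≤ (∑ f ∈ F, (1/F.card:ℝ) * (x f ^ c) ^ (1/c)) ^ (1/(1/c)) := h
    _ = (∑ f ∈ F, (1/F.card:ℝ) * x f) ^ c := by
        rw [one_div_one_div]
        congr 1
        refine Finset.sum_congr rfl fun f hf => ?_
        rw [← Real.rpow_mul (hx f hf), mul_one_div, div_self hc0.ne', Real.rpow_one]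

lemma sum_rpow_one_add_le {ι : Type*} [DecidableEq ι] (A : Finset ι) (x : ι → ℝ)
    (hx : ∀ i, 0 ≤ x i) {u : ℝ} (hu0 : 0 < u) (hu1 : u ≤ 1) :
    (∑ i ∈ A, x i) ^ (1 + u) ≤ ∑ i ∈ A, x i * (x i ^ u + (∑ j ∈ A.erase i, x j) ^ u) := by
  have hS0 : 0 ≤ ∑ i ∈ A, x i := Finset.sum_nonneg fun i _ => hx i
  rcases hS0.eq_or_lt with h | h
  · rw [← h, Real.zero_rpow (by positivity : (0:ℝ) < 1+u).ne']
    exact Finset.sum_nonneg fun i _ => mul_nonneg (hx i)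
      (add_nonneg (Real.rpow_nonneg (hx i) u)
        (Real.rpow_nonneg (Finset.sum_nonneg fun j _ => hx j) u))
  · have h1 : (∑ i ∈ A, x i) ^ (1+u) = ∑ i ∈ A, x i * (∑ j ∈ A, x j) ^ u := by
      rw [Real.rpow_add h, Real.rpow_one, ← Finset.sum_mul]
    rw [h1]
    refine Finset.sum_le_sum fun i hi => ?_
    refine mul_le_mul_of_nonneg_left ?_ (hx i)
    calc (∑ j ∈ A, x j) ^ u = (x i + ∑ j ∈ A.erase i, x j) ^ u := by
          rw [Finset.add_sum_erase A x hi]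
      _ ≤ x i ^ u + (∑ j ∈ A.erase i, x j) ^ u :=
          myAdd_rpow_le (hx i) (Finset.sum_nonneg fun j _ => hx j) hu0.le hu1

lemma per_z_avg_le {L M : Type*} [Fintype L] [Fintype M]
    [Nonempty L] [Nonempty M] [DecidableEq L] [DecidableEq M]
    (F : Finset (L → M)) (hF : F.Nonempty)
    (huniv : ∀ x₁ x₂ : L, x₁ ≠ x₂ →
      ((F.filter (fun f => f x₁ = f x₂)).card : ℝ) / F.card ≤ 1 / Fintype.card M)
    (q : L → ℝ) (hq : ∀ ℓ, 0 < q ℓ)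
    {u : ℝ} (hu0 : 0 < u) (hu1 : u ≤ 1) :
    (1 / F.card : ℝ) * ∑ f ∈ F,
        ((1 / Fintype.card M : ℝ) * ∑ m : M,
          ((Fintype.card M / Fintype.card L : ℝ) *
            ∑ ℓ ∈ univ.filter (fun ℓ : L => f ℓ = m), q ℓ) ^ (1 + u))
      ≤ ((Fintype.card M : ℝ) / Fintype.card L) ^ u *
          ((1 / Fintype.card L : ℝ) * ∑ ℓ : L, q ℓ ^ (1 + u)) +
        ((∑ ℓ : L, q ℓ) / Fintype.card L) ^ (1 + u) := by
  have hn : (0:ℝ) < Fintype.card L := by exact_mod_cast Fintype.card_pos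
  have hk : (0:ℝ) < Fintype.card M := by exact_mod_cast Fintype.card_pos
  have hFc : (0:ℝ) < F.card := by exact_mod_cast (Finset.card_pos.mpr hF)
  set n : ℝ := (Fintype.card L : ℝ) with hnn
  set k : ℝ := (Fintype.card M : ℝ) with hkk
  set D : (L → M) → L → ℝ := fun f ℓ => ∑ ℓ' ∈ univ.erase ℓ, if f ℓ' = f ℓ then q ℓ' else 0
    with hD
  have hDnonneg : ∀ f ℓ, 0 ≤ D f ℓ := by
    intro f ℓ
    refine Finset.sum_nonneg fun ℓ' _ => ?_
    by_cases h : f ℓ' = f ℓ <;> simp [h, (hq ℓ').le]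
  set S : ℝ := ∑ ℓ : L, q ℓ with hS
  have hSpos : 0 < S := Finset.sum_pos (fun ℓ _ => hq ℓ) univ_nonempty
  set U : ℝ := ∑ ℓ : L, q ℓ ^ (1 + u) with hU
  -- pointwise bound for each f
  have hXle : ∀ f : L → M,
      (1 / k) * ∑ m : M, ((k / n) * ∑ ℓ ∈ univ.filter (fun ℓ : L => f ℓ = m), q ℓ) ^ (1 + u)
      ≤ (1 / k) * (k / n) ^ (1 + u) * (U + ∑ ℓ : L, q ℓ * (D f ℓ) ^ u) := by
    intro f
    have e2 : ∑ m : M, ((k / n) * ∑ ℓ ∈ univ.filter (fun ℓ : L => f ℓ = m), q ℓ) ^ (1 + u)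
        = (k / n) ^ (1 + u) *
            ∑ m : M, (∑ ℓ ∈ univ.filter (fun ℓ : L => f ℓ = m), q ℓ) ^ (1 + u) := by
      rw [Finset.mul_sum]
      exact Finset.sum_congr rfl fun m _ =>
        Real.mul_rpow (by positivity) (Finset.sum_nonneg fun ℓ _ => (hq ℓ).le)
    have e3 : ∑ m : M, (∑ ℓ ∈ univ.filter (fun ℓ : L => f ℓ = m), q ℓ) ^ (1 + u)
        ≤ U + ∑ ℓ : L, q ℓ * (D f ℓ) ^ u := by
      calc ∑ m : M, (∑ ℓ ∈ univ.filter (fun ℓ : L => f ℓ = m), q ℓ) ^ (1 + u)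
          ≤ ∑ m : M, ∑ ℓ ∈ univ.filter (fun ℓ : L => f ℓ = m),
              q ℓ * (q ℓ ^ u + (∑ j ∈ (univ.filter (fun ℓ' : L => f ℓ' = m)).erase ℓ, q j) ^ u) :=
            Finset.sum_le_sum fun m _ => sum_rpow_one_add_le _ _ (fun ℓ => (hq ℓ).le) hu0 hu1
        _ = ∑ m : M, ∑ ℓ ∈ univ.filter (fun ℓ : L => f ℓ = m),
              q ℓ * (q ℓ ^ u + (D f ℓ) ^ u) := by
            refine Finset.sum_congr rfl fun m _ => Finset.sum_congr rfl fun ℓ hℓ => ?_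
            have hm : f ℓ = m := (Finset.mem_filter.mp hℓ).2
            subst hm
            congr 3
            rw [← Finset.filter_erase, Finset.sum_filter]
        _ = ∑ ℓ : L, q ℓ * (q ℓ ^ u + (D f ℓ) ^ u) := Finset.sum_fiberwise univ f _
        _ = U + ∑ ℓ : L, q ℓ * (D f ℓ) ^ u := by
            rw [hU, ← Finset.sum_add_distrib]
            refine Finset.sum_congr rfl fun ℓ _ => ?_
            rw [mul_add]
            congr 1
            rw [Real.rpow_add (hq ℓ), Real.rpow_one]
    calc (1 / k) * ∑ m : M, ((k / n) * ∑ ℓ ∈ univ.filter (fun ℓ : L => f ℓ = m), q ℓ) ^ (1 + u)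
        = (1 / k) * ((k / n) ^ (1 + u) *
            ∑ m : M, (∑ ℓ ∈ univ.filter (fun ℓ : L => f ℓ = m), q ℓ) ^ (1 + u)) := by rw [e2]
      _ ≤ (1 / k) * ((k / n) ^ (1 + u) * (U + ∑ ℓ : L, q ℓ * (D f ℓ) ^ u)) := by
          refine mul_le_mul_of_nonneg_left (mul_le_mul_of_nonneg_left e3 ?_) (by positivity)
          exact Real.rpow_nonneg (by positivity) _
      _ = (1 / k) * (k / n) ^ (1 + u) * (U + ∑ ℓ : L, q ℓ * (D f ℓ) ^ u) := by ring
  -- collision average bound per ℓ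
  have hcoll : ∀ ℓ : L, (1 / (F.card : ℝ)) * ∑ f ∈ F, (D f ℓ) ^ u ≤ ((1 / k) * S) ^ u := by
    intro ℓ
    refine (avg_rpow_le F hF (fun f => D f ℓ) (fun f _ => hDnonneg f ℓ) hu0 hu1).trans ?_
    refine Real.rpow_le_rpow (mul_nonneg (by positivity) (Finset.sum_nonneg fun f _ => hDnonneg f ℓ)) ?_ hu0.le
    have hsum : ∑ f ∈ F, D f ℓ
        = ∑ ℓ' ∈ univ.erase ℓ, ((F.filter (fun f => f ℓ' = f ℓ)).card : ℝ) * q ℓ' := by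
      rw [hD]
      rw [Finset.sum_comm]
      refine Finset.sum_congr rfl fun ℓ' _ => ?_
      rw [← Finset.sum_filter, Finset.sum_const, nsmul_eq_mul]
    rw [hsum, Finset.mul_sum]
    calc ∑ ℓ' ∈ univ.erase ℓ,
          (1 / (F.card : ℝ)) * (((F.filter (fun f => f ℓ' = f ℓ)).card : ℝ) * q ℓ')
        ≤ ∑ ℓ' ∈ univ.erase ℓ, (1 / k) * q ℓ' := by
          refine Finset.sum_le_sum fun ℓ' hℓ' => ?_
          have h := huniv ℓ' ℓ (Finset.ne_of_mem_erase hℓ')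
          have e : (1 / (F.card : ℝ)) * (((F.filter (fun f => f ℓ' = f ℓ)).card : ℝ) * q ℓ')
              = (((F.filter (fun f => f ℓ' = f ℓ)).card : ℝ) / F.card) * q ℓ' := by ring
          rw [e]
          exact mul_le_mul_of_nonneg_right h (hq ℓ').le
      _ ≤ ∑ ℓ' : L, (1 / k) * q ℓ' := by
          refine Finset.sum_le_sum_of_subset_of_nonneg (Finset.erase_subset ℓ univ)
            fun ℓ' _ _ => mul_nonneg (by positivity) (hq ℓ').le
      _ = (1 / k) * S := by rw [hS, Finset.mul_sum]
  -- average the pointwise bound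
  calc (1 / (F.card : ℝ)) * ∑ f ∈ F,
        ((1 / k) * ∑ m : M, ((k / n) * ∑ ℓ ∈ univ.filter (fun ℓ : L => f ℓ = m), q ℓ) ^ (1 + u))
      ≤ (1 / (F.card : ℝ)) * ∑ f ∈ F,
          ((1 / k) * (k / n) ^ (1 + u) * (U + ∑ ℓ : L, q ℓ * (D f ℓ) ^ u)) := by
        refine mul_le_mul_of_nonneg_left (Finset.sum_le_sum fun f _ => hXle f) (by positivity)
    _ = (1 / k) * (k / n) ^ (1 + u) *
          (U + (1 / (F.card : ℝ)) * ∑ f ∈ F, ∑ ℓ : L, q ℓ * (D f ℓ) ^ u) := by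
        rw [← Finset.mul_sum, Finset.sum_add_distrib, Finset.sum_const, nsmul_eq_mul]
        field_simp
    _ ≤ (1 / k) * (k / n) ^ (1 + u) * (U + S * ((1 / k) * S) ^ u) := by
        refine mul_le_mul_of_nonneg_left (add_le_add_right ?_ U) ?_
        · calc (1 / (F.card : ℝ)) * ∑ f ∈ F, ∑ ℓ : L, q ℓ * (D f ℓ) ^ u
              = ∑ ℓ : L, q ℓ * ((1 / (F.card : ℝ)) * ∑ f ∈ F, (D f ℓ) ^ u) := by
                rw [Finset.sum_comm, Finset.mul_sum]
                refine Finset.sum_congr rfl fun ℓ _ => ?_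
                rw [← Finset.mul_sum]; ring
            _ ≤ ∑ ℓ : L, q ℓ * ((1 / k) * S) ^ u :=
                Finset.sum_le_sum fun ℓ _ => mul_le_mul_of_nonneg_left (hcoll ℓ) (hq ℓ).le
            _ = S * ((1 / k) * S) ^ u := by rw [← Finset.sum_mul]
        · positivity
    _ = (k / n) ^ u * ((1 / n) * U) + (S / n) ^ (1 + u) := by
        have e5 : (k / n) ^ ((1:ℝ) + u) = (k / n) * (k / n) ^ u := by
          rw [Real.rpow_add (by positivity), Real.rpow_one]
        have e6 : ((1 / k) * S) ^ u = (1 / k) ^ u * S ^ u :=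
          Real.mul_rpow (by positivity) hSpos.le
        have e7 : (S / n) ^ ((1:ℝ) + u) = (S / n) * (S / n) ^ u := by
          rw [Real.rpow_add (by positivity), Real.rpow_one]
        have e8 : (S / n) ^ u = S ^ u * (1 / n) ^ u := by
          rw [show S / n = S * (1 / n) by ring, Real.mul_rpow hSpos.le (by positivity)]
        have e9 : ((1:ℝ) / n) ^ u = (1 / k) ^ u * (k / n) ^ u := by
          rw [← Real.mul_rpow (by positivity) (by positivity),
            show (1 / k) * (k / n) = 1 / n by field_simp]
        rw [e5, e7, e8, e9, e6]
        field_simp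
/-- The core chain of inequalities in the new privacy amplification theorem:
the average over a regular two-universal hash family of exp(φ̄(s, Q_{Z|f(L)}))
is at most 1 + (|M|/|L|)^s · exp(φ̄(s, Q)). -/
theorem avg_exp_phiBar_hashed_le
    {L M Z : Type*} [Fintype L] [Fintype M] [Fintype Z]
    [Nonempty L] [Nonempty M] [Nonempty Z] [DecidableEq L] [DecidableEq M]
    (F : Finset (L → M)) (hF : F.Nonempty)
    (huniv : ∀ x₁ x₂ : L, x₁ ≠ x₂ →
      ((F.filter (fun f => f x₁ = f x₂)).card : ℝ) / F.card ≤ 1 / Fintype.card M)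
    (hreg : ∀ f ∈ F, ∀ m : M,
      (univ.filter (fun ℓ : L => f ℓ = m)).card * Fintype.card M = Fintype.card L)
    (Q : L → Z → ℝ) (hQpos : ∀ ℓ z, 0 < Q ℓ z) (hQsum : ∀ ℓ, ∑ z : Z, Q ℓ z = 1)
    (s : ℝ) (hs0 : 0 < s) (hs1 : s ≤ 1 / 2)
    (u : ℝ) (hu : u = s / (1 - s)) :
    (1 / F.card : ℝ) *
        ∑ f ∈ F, Real.exp (Real.log (∑ z : Z,
          ((1 / Fintype.card M : ℝ) * ∑ m : M,
              ((Fintype.card M / Fintype.card L : ℝ) *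
                ∑ ℓ ∈ univ.filter (fun ℓ : L => f ℓ = m), Q ℓ z) ^ (1 + u))
            ^ ((1 : ℝ) / (1 + u)))) ≤
      1 + ((Fintype.card M : ℝ) / Fintype.card L) ^ s *
        Real.exp (Real.log (∑ z : Z,
          ((1 / Fintype.card L : ℝ) * ∑ ℓ : L, Q ℓ z ^ (1 + u))
            ^ ((1 : ℝ) / (1 + u)))) := by
  have hn : (0:ℝ) < Fintype.card L := by exact_mod_cast Fintype.card_pos
  have hk : (0:ℝ) < Fintype.card M := by exact_mod_cast Fintype.card_pos
  have hFc : (0:ℝ) < F.card := by exact_mod_cast (Finset.card_pos.mpr hF)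
  have h1s : (0:ℝ) < 1 - s := by linarith
  have hu0 : (0:ℝ) < u := by rw [hu]; positivity
  have hu1 : u ≤ 1 := by rw [hu, div_le_one h1s]; linarith
  have h1u : (0:ℝ) < 1 + u := by linarith
  have hc0 : (0:ℝ) < 1/(1+u) := by positivity
  have hc1 : (1:ℝ)/(1+u) ≤ 1 := by rw [div_le_one h1u]; linarith
  have h1uc : (1+u) * ((1:ℝ)/(1+u)) = 1 := by field_simp
  have hcu : u * ((1:ℝ)/(1+u)) = s := by
    rw [hu, show (1:ℝ) + s/(1-s) = 1/(1-s) by field_simp; ring]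
    rw [one_div_one_div]
    exact div_mul_cancel₀ s h1s.ne'
  set n : ℝ := (Fintype.card L : ℝ) with hnn
  set k : ℝ := (Fintype.card M : ℝ) with hkk
  -- positivity of the inner expressions
  have hXpos : ∀ (f : L → M) (z : Z), 0 < (1 / k) * ∑ m : M,
      ((k / n) * ∑ ℓ ∈ univ.filter (fun ℓ : L => f ℓ = m), Q ℓ z) ^ (1 + u) := by
    intro f z
    refine mul_pos (by positivity) ?_
    have hterm : ∀ m ∈ (univ : Finset M), 0 ≤
        ((k / n) * ∑ ℓ ∈ univ.filter (fun ℓ : L => f ℓ = m), Q ℓ z) ^ (1+u) := fun m _ =>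
      Real.rpow_nonneg
        (mul_nonneg (by positivity) (Finset.sum_nonneg fun ℓ _ => (hQpos ℓ z).le)) _
    obtain ⟨ℓ₀⟩ := (inferInstance : Nonempty L)
    have hmem : ℓ₀ ∈ univ.filter (fun ℓ : L => f ℓ = f ℓ₀) := by simp
    have hpos0 : 0 < ∑ ℓ ∈ univ.filter (fun ℓ : L => f ℓ = f ℓ₀), Q ℓ z :=
      Finset.sum_pos' (fun ℓ _ => (hQpos ℓ z).le) ⟨ℓ₀, hmem, hQpos ℓ₀ z⟩
    have h0 : 0 < ((k / n) * ∑ ℓ ∈ univ.filter (fun ℓ : L => f ℓ = f ℓ₀), Q ℓ z) ^ (1+u) :=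
      Real.rpow_pos_of_pos (mul_pos (by positivity) hpos0) _
    exact lt_of_lt_of_le h0 (Finset.single_le_sum hterm (Finset.mem_univ (f ℓ₀)))
  have hGpos : ∀ f : L → M, 0 < ∑ z : Z,
      ((1 / k) * ∑ m : M,
        ((k / n) * ∑ ℓ ∈ univ.filter (fun ℓ : L => f ℓ = m), Q ℓ z) ^ (1 + u))
        ^ ((1 : ℝ) / (1 + u)) := fun f =>
    Finset.sum_pos (fun z _ => Real.rpow_pos_of_pos (hXpos f z) _) univ_nonempty
  have hUpos : ∀ z : Z, 0 < (1 / n) * ∑ ℓ : L, Q ℓ z ^ (1 + u) := fun z =>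
    mul_pos (by positivity)
      (Finset.sum_pos (fun ℓ _ => Real.rpow_pos_of_pos (hQpos ℓ z) _) univ_nonempty)
  have hRpos : 0 < ∑ z : Z, ((1 / n) * ∑ ℓ : L, Q ℓ z ^ (1 + u)) ^ ((1 : ℝ) / (1 + u)) :=
    Finset.sum_pos (fun z _ => Real.rpow_pos_of_pos (hUpos z) _) univ_nonempty
  rw [Real.exp_log hRpos]
  rw [Finset.sum_congr rfl (fun f _ => Real.exp_log (hGpos f))]
  -- main chain
  have hSpos : ∀ z : Z, 0 < ∑ ℓ : L, Q ℓ z := fun z =>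
    Finset.sum_pos (fun ℓ _ => hQpos ℓ z) univ_nonempty
  calc (1 / (F.card : ℝ)) * ∑ f ∈ F, ∑ z : Z,
        ((1 / k) * ∑ m : M,
          ((k / n) * ∑ ℓ ∈ univ.filter (fun ℓ : L => f ℓ = m), Q ℓ z) ^ (1 + u))
          ^ ((1 : ℝ) / (1 + u))
      = ∑ z : Z, (1 / (F.card : ℝ)) * ∑ f ∈ F,
          ((1 / k) * ∑ m : M,
            ((k / n) * ∑ ℓ ∈ univ.filter (fun ℓ : L => f ℓ = m), Q ℓ z) ^ (1 + u))
            ^ ((1 : ℝ) / (1 + u)) := by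
        rw [Finset.sum_comm, Finset.mul_sum]
    _ ≤ ∑ z : Z, ((1 / (F.card : ℝ)) * ∑ f ∈ F,
          (1 / k) * ∑ m : M,
            ((k / n) * ∑ ℓ ∈ univ.filter (fun ℓ : L => f ℓ = m), Q ℓ z) ^ (1 + u))
            ^ ((1 : ℝ) / (1 + u)) :=
        Finset.sum_le_sum fun z _ =>
          avg_rpow_le F hF _ (fun f _ => (hXpos f z).le) hc0 hc1
    _ ≤ ∑ z : Z, ((k / n) ^ u * ((1 / n) * ∑ ℓ : L, Q ℓ z ^ (1 + u)) +
          ((∑ ℓ : L, Q ℓ z) / n) ^ (1 + u)) ^ ((1 : ℝ) / (1 + u)) := by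
        refine Finset.sum_le_sum fun z _ => ?_
        refine Real.rpow_le_rpow ?_ ?_ hc0.le
        · exact mul_nonneg (by positivity) (Finset.sum_nonneg fun f _ => (hXpos f z).le)
        · exact per_z_avg_le F hF huniv (fun ℓ => Q ℓ z) (fun ℓ => hQpos ℓ z) hu0 hu1
    _ ≤ ∑ z : Z, (((k / n) ^ u * ((1 / n) * ∑ ℓ : L, Q ℓ z ^ (1 + u))) ^ ((1 : ℝ) / (1 + u)) +
          ((((∑ ℓ : L, Q ℓ z) / n) ^ (1 + u)) ^ ((1 : ℝ) / (1 + u)))) := by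
        refine Finset.sum_le_sum fun z _ => ?_
        refine myAdd_rpow_le ?_ ?_ hc0.le hc1
        · exact mul_nonneg (Real.rpow_nonneg (by positivity) _) (hUpos z).le
        · exact Real.rpow_nonneg (div_nonneg (hSpos z).le hn.le) _
    _ = ∑ z : Z, ((k / n) ^ s * ((1 / n) * ∑ ℓ : L, Q ℓ z ^ (1 + u)) ^ ((1 : ℝ) / (1 + u)))
          + ∑ z : Z, (∑ ℓ : L, Q ℓ z) / n := by
        rw [← Finset.sum_add_distrib]
        refine Finset.sum_congr rfl fun z _ => ?_
        congr 1
        · rw [Real.mul_rpow (Real.rpow_nonneg (by positivity) _) (hUpos z).le,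
            ← Real.rpow_mul (by positivity : (0:ℝ) ≤ k / n), hcu]
        · rw [← Real.rpow_mul (div_nonneg (hSpos z).le hn.le), h1uc, Real.rpow_one]
    _ = 1 + (k / n) ^ s *
          ∑ z : Z, ((1 / n) * ∑ ℓ : L, Q ℓ z ^ (1 + u)) ^ ((1 : ℝ) / (1 + u)) := by
        rw [← Finset.mul_sum]
        have hone : ∑ z : Z, (∑ ℓ : L, Q ℓ z) / n = 1 := by
          rw [← Finset.sum_div, Finset.sum_comm]
          simp only [hQsum]
          rw [Finset.sum_const, nsmul_eq_mul, mul_one, Finset.card_univ]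
          exact div_self hn.ne'
        rw [hone]
        ring
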